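/- Let G = (V,E) be a finite simple graph with Laplacian L = D - A and let φ, ψ : V → ℝ satisfy ⟨φ,(D+A)φ⟩ ≤ ε‖φ‖²_{ℓ²} and ⟨ψ,(D+A)ψ⟩ ≤ ε‖ψ‖²_{ℓ²}, with φ·ψ not identically zero. Then the Rayleigh quotient of the pointwise product satisfies ⟨φ·ψ, L(φ·ψ)⟩ / ‖φ·ψ‖²_{ℓ²} ≤ 2ε(‖φ‖²_{ℓ^∞}‖ψ‖²_{ℓ²} + ‖φ‖²_{ℓ²}‖ψ‖²_{ℓ^∞}) / ‖φ·ψ‖²_{ℓ²}. -/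
import Mathlib


open Matrix Finset

private lemma signless_quadform {V : Type*} [Fintype V] [DecidableEq V]
    (G : SimpleGraph V) [DecidableRel G.Adj] (x : V → ℝ) :
    x ⬝ᵥ ((G.degMatrix ℝ + G.adjMatrix ℝ) *ᵥ x) =
      (∑ i : V, ∑ j : V, if G.Adj i j then (x i + x j)^2 else 0) / 2 := by
  simp_rw [add_mulVec, dotProduct_add, G.dotProduct_mulVec_degMatrix,
    SimpleGraph.dotProduct_mulVec_adjMatrix, ← sum_add_distrib, SimpleGraph.degree_eq_sum_if_adj,
    sum_mul, ite_mul, one_mul, zero_mul, ← sum_add_distrib, ite_add_ite, add_zero]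
  rw [← add_self_div_two (∑ x_1 : V, ∑ x_2 : V, _)]
  conv_lhs => enter [1,2,2,i,2,j]; rw [if_congr (SimpleGraph.adj_comm G i j) rfl rfl]
  conv_lhs => enter [1,2]; rw [Finset.sum_comm]
  simp_rw [← sum_add_distrib, ite_add_ite]
  congr 2 with i
  congr 2 with j
  ring_nf

theorem product_rayleigh_quotient_bound
    {V : Type*} [Fintype V] [DecidableEq V] [Nonempty V]
    (G : SimpleGraph V) [DecidableRel G.Adj]
    (φ ψ : V → ℝ) (ε : ℝ) (hε : 0 ≤ ε)
    (hφ : φ ⬝ᵥ ((G.degMatrix ℝ + G.adjMatrix ℝ) *ᵥ φ) ≤ ε * ∑ v, φ v ^ 2)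
    (hψ : ψ ⬝ᵥ ((G.degMatrix ℝ + G.adjMatrix ℝ) *ᵥ ψ) ≤ ε * ∑ v, ψ v ^ 2)
    (hne : 0 < ∑ v, (φ v * ψ v) ^ 2) :
    ((fun v => φ v * ψ v) ⬝ᵥ (G.lapMatrix ℝ *ᵥ fun v => φ v * ψ v))
        / ∑ v, (φ v * ψ v) ^ 2
      ≤ 2 * ε * ((⨆ v, |φ v|) ^ 2 * (∑ v, ψ v ^ 2)
          + (∑ v, φ v ^ 2) * (⨆ v, |ψ v|) ^ 2) / ∑ v, (φ v * ψ v) ^ 2 := by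
  set Mφ := ⨆ v, |φ v| with hMφdef
  set Mψ := ⨆ v, |ψ v| with hMψdef
  have hbφ : ∀ v, |φ v| ≤ Mφ := fun v =>
    le_ciSup (f := fun v => |φ v|) (Set.Finite.bddAbove (Set.finite_range _)) v
  have hbψ : ∀ v, |ψ v| ≤ Mψ := fun v =>
    le_ciSup (f := fun v => |ψ v|) (Set.Finite.bddAbove (Set.finite_range _)) v
  have hMφ0 : 0 ≤ Mφ := le_trans (abs_nonneg _) (hbφ (Classical.arbitrary V))
  have hMψ0 : 0 ≤ Mψ := le_trans (abs_nonneg _) (hbψ (Classical.arbitrary V))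
  have hlap : ((fun v => φ v * ψ v) ⬝ᵥ (G.lapMatrix ℝ *ᵥ fun v => φ v * ψ v)) =
      (∑ i : V, ∑ j : V, if G.Adj i j then (φ i * ψ i - φ j * ψ j)^2 else 0) / 2 := by
    rw [← toLinearMap₂'_apply', SimpleGraph.lapMatrix_toLinearMap₂']
  gcongr
  rw [hlap, div_le_iff₀ (by norm_num : (0:ℝ) < 2)] at *
  calc (∑ i : V, ∑ j : V, if G.Adj i j then (φ i * ψ i - φ j * ψ j)^2 else 0)
      ≤ ∑ i : V, ∑ j : V, if G.Adj i j then
          2 * Mψ^2 * (φ i + φ j)^2 + 2 * Mφ^2 * (ψ i + ψ j)^2 else 0 := by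
        apply sum_le_sum; intro i _; apply sum_le_sum; intro j _
        split
        · have h1 : (φ i * ψ i - φ j * ψ j)^2 ≤
              2 * (ψ i)^2 * (φ i + φ j)^2 + 2 * (φ j)^2 * (ψ i + ψ j)^2 := by
            have key : φ i * ψ i - φ j * ψ j = ψ i * (φ i + φ j) - φ j * (ψ i + ψ j) := by
              ring
            rw [key]
            nlinarith [sq_nonneg (ψ i * (φ i + φ j) + φ j * (ψ i + ψ j)),
              sq_nonneg (ψ i * (φ i + φ j) - φ j * (ψ i + ψ j))]
          refine h1.trans (add_le_add ?_ ?_)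
          · have : (ψ i)^2 ≤ Mψ^2 := by
              rw [← sq_abs (ψ i)]; exact pow_le_pow_left₀ (abs_nonneg _) (hbψ i) 2
            nlinarith [sq_nonneg (φ i + φ j)]
          · have : (φ j)^2 ≤ Mφ^2 := by
              rw [← sq_abs (φ j)]; exact pow_le_pow_left₀ (abs_nonneg _) (hbφ j) 2
            nlinarith [sq_nonneg (ψ i + ψ j)]
        · exact le_refl _
    _ = 2 * Mψ^2 * (∑ i : V, ∑ j : V, if G.Adj i j then (φ i + φ j)^2 else 0)
          + 2 * Mφ^2 * (∑ i : V, ∑ j : V, if G.Adj i j then (ψ i + ψ j)^2 else 0) := by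
        simp_rw [mul_sum, ← sum_add_distrib]
        congr 1 with i; congr 1 with j
        split <;> simp
    _ ≤ 2 * Mψ^2 * (2 * (ε * ∑ v, φ v ^ 2)) + 2 * Mφ^2 * (2 * (ε * ∑ v, ψ v ^ 2)) := by
        have h1 : (∑ i : V, ∑ j : V, if G.Adj i j then (φ i + φ j)^2 else 0)
            ≤ 2 * (ε * ∑ v, φ v ^ 2) := by
          have := signless_quadform G φ
          linarith [this, hφ]
        have h2 : (∑ i : V, ∑ j : V, if G.Adj i j then (ψ i + ψ j)^2 else 0)
            ≤ 2 * (ε * ∑ v, ψ v ^ 2) := by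
          have := signless_quadform G ψ
          linarith [this, hψ]
        gcongr <;> positivity
    _ = 2 * ε * (Mφ ^ 2 * (∑ v, ψ v ^ 2) + (∑ v, φ v ^ 2) * Mψ ^ 2) * 2 := by ring
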